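/- Let Qₙ(·|x) and Q(·|x) be transition kernels from a metric space X to a Polish space S such that for every bounded continuous u: S → ℝ, the maps x ↦ ∫ u dQₙ(·|x) converge continuously to x ↦ ∫ u dQ(·|x) (i.e., whenever xₙ → x, ∫ u dQₙ(·|xₙ) → ∫ u dQ(·|x)). If ηₙ ⇒ η weakly in Δ(X), then the measures νₙ(·) := ∫_X Qₙ(·|x) ηₙ(dx) converge weakly to ν(·) := ∫_X Q(·|x) η(dx). -/

import Mathlib

open MeasureTheory Filter Topology BoundedContinuousFunction
open scoped ENNReal

/-- Bochner integral against a mixture `μ.bind Q` of probability kernels. -/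
lemma integral_bind_of_measurable' {X S : Type*} [MeasurableSpace X] [MeasurableSpace S]
    (μ : Measure X) [IsProbabilityMeasure μ] (Q : X → Measure S) (hQm : Measurable Q)
    (hQp : ∀ x, IsProbabilityMeasure (Q x)) {f : S → ℝ} (hf : Measurable f)
    {C : ℝ} (hb : ∀ s, ‖f s‖ ≤ C) :
    ∫ s, f s ∂(μ.bind Q) = ∫ x, ∫ s, f s ∂(Q x) ∂μ := by
  set κ : ProbabilityTheory.Kernel X S := ⟨Q, hQm⟩ with hκ
  haveI : ProbabilityTheory.IsMarkovKernel κ := ⟨hQp⟩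
  have hbind : μ.bind Q = (μ.compProd κ).map Prod.snd := by
    ext s hs
    rw [Measure.map_apply measurable_snd hs,
      Measure.compProd_apply (measurable_snd hs), Measure.bind_apply hs hQm.aemeasurable]
    rfl
  have hmeas : Measurable fun p : X × S => f p.2 := hf.comp measurable_snd
  have hint : Integrable (fun p : X × S => f p.2) (μ.compProd κ) :=
    ⟨hmeas.stronglyMeasurable.aestronglyMeasurable,
      HasFiniteIntegral.of_bounded (ae_of_all _ fun p => hb p.2)⟩
  rw [hbind, integral_map measurable_snd.aemeasurable
    hf.stronglyMeasurable.aestronglyMeasurable, Measure.integral_compProd hint]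
  rfl

/-- Continuous convergence in a metric space implies local uniform approximation. -/
lemma loc_unif_of_cc {X : Type*} [MetricSpace X] (g : ℕ → X → ℝ) (G : X → ℝ)
    (hcc : ∀ (xs : ℕ → X) (x : X), Tendsto xs atTop (𝓝 x) →
      Tendsto (fun n => g n (xs n)) atTop (𝓝 (G x)))
    {ε : ℝ} (hε : 0 < ε) (x : X) :
    ∃ δ > 0, ∃ N, ∀ n ≥ N, ∀ y, dist y x < δ → |g n y - G x| ≤ ε := by
  by_contra h
  push_neg at h
  have hfreq : ∀ k : ℕ, ∃ᶠ n in atTop,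
      ∃ y, dist y x < 1 / (k + 1) ∧ ε < |g n y - G x| := by
    intro k
    rw [frequently_atTop]
    intro N
    obtain ⟨n, hn, hy⟩ := h (1 / (k + 1)) (by positivity) N
    exact ⟨n, hn, hy⟩
  obtain ⟨φ, hφ, hP⟩ := Filter.extraction_forall_of_frequently hfreq
  choose y hy1 hy2 using hP
  classical
  set xs : ℕ → X := fun m => if h : ∃ k, φ k = m then y h.choose else x with hxs
  have hxsφ : ∀ k, xs (φ k) = y k := by
    intro k
    have hex : ∃ k', φ k' = φ k := ⟨k, rfl⟩
    have hck : hex.choose = k := hφ.injective hex.choose_spec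
    simp only [hxs, dif_pos hex, hck]
  have hten : Tendsto xs atTop (𝓝 x) := by
    rw [Metric.tendsto_atTop]
    intro ε' hε'
    obtain ⟨K, hK⟩ := exists_nat_one_div_lt hε'
    refine ⟨φ K, fun m hm => ?_⟩
    by_cases hex : ∃ k, φ k = m
    · rw [hxs]
      simp only [dif_pos hex]
      have hcK : K ≤ hex.choose := by
        rw [← hφ.le_iff_le, hex.choose_spec]
        exact hm
      have h1 : dist (y hex.choose) x < 1 / (hex.choose + 1) := hy1 hex.choose
      have h2 : (1 : ℝ) / (hex.choose + 1) ≤ 1 / (K + 1) := by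
        apply one_div_le_one_div_of_le (by positivity)
        have : (K : ℝ) ≤ hex.choose := Nat.cast_le.mpr hcK
        linarith
      linarith
    · rw [hxs]
      simp only [dif_neg hex, dist_self]
      exact hε'
  have hlim := (hcc xs x hten).comp hφ.tendsto_atTop
  rw [Metric.tendsto_atTop] at hlim
  obtain ⟨K, hKlim⟩ := hlim ε hε
  have h1 := hKlim K le_rfl
  rw [Function.comp_apply, hxsφ, Real.dist_eq] at h1
  exact absurd h1 (not_lt.mpr (hy2 K).le)

/-- Serfozo-type core lemma: continuously convergent, uniformly bounded measurable integrands
against weakly convergent probability measures. -/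
lemma serfozo_core {X : Type*} [MetricSpace X] [MeasurableSpace X] [BorelSpace X]
    (g : ℕ → X → ℝ) (G : X → ℝ) {C : ℝ} (hC : 0 ≤ C)
    (hgm : ∀ n, StronglyMeasurable (g n)) (hgb : ∀ n x, |g n x| ≤ C)
    (hcc : ∀ (xs : ℕ → X) (x : X), Tendsto xs atTop (𝓝 x) →
      Tendsto (fun n => g n (xs n)) atTop (𝓝 (G x)))
    (ηn : ℕ → Measure X) (η : Measure X)
    (hηnp : ∀ n, IsProbabilityMeasure (ηn n)) [IsProbabilityMeasure η]
    (hweak : ∀ f : X →ᵇ ℝ,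
      Tendsto (fun n => ∫ x, f x ∂(ηn n)) atTop (𝓝 (∫ x, f x ∂η))) :
    Tendsto (fun n => ∫ x, g n x ∂(ηn n)) atTop (𝓝 (∫ x, G x ∂η)) := by
  have hpt : ∀ x, Tendsto (fun n => g n x) atTop (𝓝 (G x)) :=
    fun x => hcc (fun _ => x) x tendsto_const_nhds
  have hGb : ∀ x, |G x| ≤ C := fun x =>
    le_of_tendsto (hpt x).abs (Eventually.of_forall fun n => hgb n x)
  have hGc : Continuous G := by
    rw [Metric.continuous_iff]
    intro x ε hε
    obtain ⟨δ, hδ, N, hN⟩ := loc_unif_of_cc g G hcc (half_pos hε) x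
    refine ⟨δ, hδ, fun y hy => ?_⟩
    have h1 : Tendsto (fun n => |g n y - G x|) atTop (𝓝 |G y - G x|) :=
      ((hpt y).sub tendsto_const_nhds).abs
    have h2 : |G y - G x| ≤ ε / 2 :=
      le_of_tendsto h1 (eventually_atTop.mpr ⟨N, fun n hn => hN n hn y hy⟩)
    rw [Real.dist_eq]
    linarith
  have hGsm : StronglyMeasurable G := hGc.measurable.stronglyMeasurable
  set Gb : X →ᵇ ℝ := BoundedContinuousFunction.ofNormedAddCommGroup G hGc C
    (fun x => by simpa [Real.norm_eq_abs] using hGb x) with hGbdef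
  have hweakG : Tendsto (fun n => ∫ x, G x ∂(ηn n)) atTop (𝓝 (∫ x, G x ∂η)) := hweak Gb
  have intg : ∀ n, Integrable (g n) (ηn n) := fun n =>
    haveI := hηnp n
    ⟨(hgm n).aestronglyMeasurable,
      HasFiniteIntegral.of_bounded (ae_of_all _ fun x => by
        simpa [Real.norm_eq_abs] using hgb n x)⟩
  have intG : ∀ n, Integrable G (ηn n) := fun n =>
    haveI := hηnp n
    ⟨hGsm.aestronglyMeasurable,
      HasFiniteIntegral.of_bounded (ae_of_all _ fun x => by
        simpa [Real.norm_eq_abs] using hGb x)⟩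
  suffices hdiff : Tendsto (fun n => ∫ x, g n x ∂(ηn n) - ∫ x, G x ∂(ηn n)) atTop (𝓝 0) by
    have := hdiff.add hweakG
    simpa using this
  rw [NormedAddCommGroup.tendsto_nhds_zero]
  intro ε hε
  have hden : (0 : ℝ) < 1 + 2 * C := by linarith
  set ε₀ : ℝ := ε / (2 * (1 + 2 * C)) with hε₀def
  have hε₀ : 0 < ε₀ := by positivity
  set Pn : ℕ → ProbabilityMeasure X := fun n => ⟨ηn n, hηnp n⟩ with hPn
  set P : ProbabilityMeasure X := ⟨η, inferInstance⟩ with hPdef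
  have hPt : Tendsto Pn atTop (𝓝 P) :=
    (ProbabilityMeasure.tendsto_iff_forall_integral_tendsto).mpr fun f => hweak f
  set U : ℕ → Set X := fun N =>
    {x | ∃ δ > 0, ∀ n ≥ N, ∀ y, dist y x < δ → |g n y - G y| ≤ ε₀} with hU
  have hUopen : ∀ N, IsOpen (U N) := by
    intro N
    rw [Metric.isOpen_iff]
    rintro x ⟨δ, hδ, hx⟩
    refine ⟨δ / 2, by linarith, fun x' hx' => ?_⟩
    rw [Metric.mem_ball] at hx'
    exact ⟨δ / 2, by linarith, fun n hn y hy =>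
      hx n hn y (by have := dist_triangle y x' x; linarith)⟩
  have hUmono : Monotone U := fun N M hNM x => by
    rintro ⟨δ, hδ, hx⟩
    exact ⟨δ, hδ, fun n hn => hx n (le_trans hNM hn)⟩
  have hUuniv : ⋃ N, U N = Set.univ := by
    rw [Set.eq_univ_iff_forall]
    intro x
    obtain ⟨δ, hδ, N, hN⟩ := loc_unif_of_cc g G hcc (half_pos hε₀) x
    rw [Set.mem_iUnion]
    refine ⟨N, δ, hδ, fun n hn y hy => ?_⟩
    have h1 : Tendsto (fun m => |g m y - G x|) atTop (𝓝 |G y - G x|) :=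
      ((hpt y).sub tendsto_const_nhds).abs
    have h2 : |G y - G x| ≤ ε₀ / 2 :=
      le_of_tendsto h1 (eventually_atTop.mpr ⟨N, fun m hm => hN m hm y hy⟩)
    have h3 : |g n y - G x| ≤ ε₀ / 2 := hN n hn y hy
    calc |g n y - G y| ≤ |g n y - G x| + |G x - G y| := abs_sub_le _ _ _
      _ ≤ ε₀ / 2 + ε₀ / 2 := add_le_add h3 (by rwa [abs_sub_comm])
      _ = ε₀ := by ring
  have htU : Tendsto (fun N => η (U N)) atTop (𝓝 1) := by
    have := tendsto_measure_iUnion_atTop (μ := η) hUmono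
    rwa [hUuniv, measure_univ] at this
  have hlt1 : (1 : ℝ≥0∞) - ENNReal.ofReal ε₀ < 1 :=
    ENNReal.sub_lt_self ENNReal.one_ne_top one_ne_zero
      (ENNReal.ofReal_pos.mpr hε₀).ne'
  obtain ⟨N₀, hN₀⟩ := ((tendsto_order.1 htU).1 _ hlt1).exists
  have hport : η (U N₀) ≤ atTop.liminf (fun n => ηn n (U N₀)) :=
    ProbabilityMeasure.le_liminf_measure_open_of_tendsto hPt (hUopen N₀)
  have hev : ∀ᶠ n in atTop, 1 - ENNReal.ofReal ε₀ < ηn n (U N₀) :=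
    eventually_lt_of_lt_liminf (lt_of_lt_of_le hN₀ hport)
  have hmeasU : MeasurableSet (U N₀) := (hUopen N₀).measurableSet
  filter_upwards [hev, eventually_ge_atTop N₀] with n hn1 hn2
  haveI := hηnp n
  have hcompl : ηn n (U N₀)ᶜ ≤ ENNReal.ofReal ε₀ := by
    rw [prob_compl_eq_one_sub hmeasU, tsub_le_iff_right]
    have h := tsub_le_iff_right.mp hn1.le
    rwa [add_comm] at h
  have hcr : ((ηn n) (U N₀)ᶜ).toReal ≤ ε₀ := by
    have := ENNReal.toReal_mono ENNReal.ofReal_ne_top hcompl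
    rwa [ENNReal.toReal_ofReal hε₀.le] at this
  have hUr : ((ηn n) (U N₀)).toReal ≤ 1 := by
    have h := ENNReal.toReal_mono ENNReal.one_ne_top (prob_le_one (μ := ηn n) (s := U N₀))
    simpa using h
  have hUb : ∀ x ∈ U N₀, |g n x - G x| ≤ ε₀ := by
    rintro x ⟨δ, hδ, hx⟩
    exact hx n hn2 x (by rwa [dist_self])
  have hintsub : Integrable (fun x => g n x - G x) (ηn n) := (intg n).sub (intG n)
  rw [show ∫ x, g n x ∂ηn n - ∫ x, G x ∂ηn n = ∫ x, (g n x - G x) ∂ηn n from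
    (integral_sub (intg n) (intG n)).symm]
  have hsplit : ∫ x, (g n x - G x) ∂ηn n
      = (∫ x in U N₀, (g n x - G x) ∂ηn n) + ∫ x in (U N₀)ᶜ, (g n x - G x) ∂ηn n :=
    (integral_add_compl hmeasU hintsub).symm
  have hb1 : ‖∫ x in U N₀, (g n x - G x) ∂ηn n‖ ≤ ε₀ * ((ηn n) (U N₀)).toReal :=
    norm_setIntegral_le_of_norm_le_const_ae' (measure_lt_top _ _)
      (ae_of_all _ fun x hx => by simpa [Real.norm_eq_abs] using hUb x hx)
  have hb2 : ‖∫ x in (U N₀)ᶜ, (g n x - G x) ∂ηn n‖ ≤ (2 * C) * ((ηn n) (U N₀)ᶜ).toReal :=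
    norm_setIntegral_le_of_norm_le_const_ae' (measure_lt_top _ _)
      (ae_of_all _ fun x _ => by
        have h1 := hgb n x
        have h2 := hGb x
        rw [Real.norm_eq_abs]
        calc |g n x - G x| ≤ |g n x| + |G x| := abs_sub _ _
          _ ≤ 2 * C := by linarith)
  have hkey : ‖∫ x, (g n x - G x) ∂ηn n‖ ≤ ε₀ * 1 + (2 * C) * ε₀ := by
    rw [hsplit]
    refine le_trans (norm_add_le _ _) (add_le_add (le_trans hb1 ?_) (le_trans hb2 ?_))
    · exact mul_le_mul_of_nonneg_left hUr hε₀.le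
    · exact mul_le_mul_of_nonneg_left hcr (by linarith)
  have hfinal : ε₀ * 1 + (2 * C) * ε₀ = ε / 2 := by
    rw [hε₀def]
    field_simp
  rw [hfinal] at hkey
  linarith

/-- Serfozo-type result: if the kernels Qₙ converge continuously to Q (in the weak sense)
and ηₙ ⇒ η, then the mixtures νₙ = ∫ Qₙ dηₙ converge weakly to ν = ∫ Q dη. -/
theorem stmt17 {X S : Type*} [MetricSpace X] [MeasurableSpace X] [BorelSpace X]
    [MetricSpace S] [MeasurableSpace S] [BorelSpace S]
    (Qn : ℕ → X → Measure S) (Q : X → Measure S)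
    (hQnm : ∀ n, Measurable (Qn n)) (hQm : Measurable Q)
    (hQnp : ∀ n x, IsProbabilityMeasure (Qn n x)) (hQp : ∀ x, IsProbabilityMeasure (Q x))
    (hcc : ∀ u : S →ᵇ ℝ, ∀ (xs : ℕ → X) (x : X), Tendsto xs atTop (𝓝 x) →
      Tendsto (fun n => ∫ s, u s ∂(Qn n (xs n))) atTop (𝓝 (∫ s, u s ∂(Q x))))
    (ηn : ℕ → Measure X) (η : Measure X)
    (hηnp : ∀ n, IsProbabilityMeasure (ηn n)) [IsProbabilityMeasure η]
    (hweak : ∀ f : X →ᵇ ℝ,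
      Tendsto (fun n => ∫ x, f x ∂(ηn n)) atTop (𝓝 (∫ x, f x ∂η))) :
    ∀ f : S →ᵇ ℝ,
      Tendsto (fun n => ∫ s, f s ∂((ηn n).bind (Qn n)))
        atTop (𝓝 (∫ s, f s ∂(η.bind Q))) := by
  intro f
  have h1 : ∀ n, ∫ s, f s ∂((ηn n).bind (Qn n)) = ∫ x, ∫ s, f s ∂(Qn n x) ∂(ηn n) := fun n =>
    haveI := hηnp n
    integral_bind_of_measurable' (ηn n) (Qn n) (hQnm n) (hQnp n)
      f.continuous.measurable (fun s => f.norm_coe_le_norm s)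
  have h2 : ∫ s, f s ∂(η.bind Q) = ∫ x, ∫ s, f s ∂(Q x) ∂η :=
    integral_bind_of_measurable' η Q hQm hQp f.continuous.measurable
      (fun s => f.norm_coe_le_norm s)
  simp only [h1, h2]
  refine serfozo_core (fun n x => ∫ s, f s ∂(Qn n x)) (fun x => ∫ s, f s ∂(Q x))
    (norm_nonneg f) ?_ ?_ (fun xs x h => hcc f xs x h) ηn η hηnp hweak
  · intro n
    letI κ : ProbabilityTheory.Kernel X S := ⟨Qn n, hQnm n⟩
    haveI : ProbabilityTheory.IsMarkovKernel κ := ⟨hQnp n⟩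
    have hsm : StronglyMeasurable (Function.uncurry fun (_ : X) (s : S) => f s) :=
      (f.continuous.measurable.comp measurable_snd).stronglyMeasurable
    exact MeasureTheory.StronglyMeasurable.integral_kernel_prod_right (κ := κ) hsm
  · intro n x
    haveI := hQnp n x
    have := norm_integral_le_of_norm_le_const (μ := Qn n x)
      (ae_of_all _ fun s => f.norm_coe_le_norm s)
    simpa [measure_univ, Real.norm_eq_abs] using this
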